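/- Asymptotic degeneracy of the modified PMCHWT symbol at zero frequency: for n ≥ 1 and wave speeds c₁, c₂ and moduli s₁, s₂ > 0, the 2×2 mode-n frequency-domain PMCHWT matrix K(Ω;n) with entries K₁₁ = -(zH'J(c₁) + zHJ'(c₂)), K₁₂ = -iΩ(HJ(c₁)/s₁ + HJ(c₂)/s₂), K₂₁ = (i/Ω)(s₁ z²H'J'(c₁) + s₂ z²H'J'(c₂)), K₂₂ = zHJ'(c₁) + zH'J(c₂), where z = Ω/c and HJ(c) = H_n⁽¹⁾(Ω/c)J_n(Ω/c) etc., satisfies as Ω → 0: K₁₁ = o(Ω), K₁₂ = O(Ω), K₂₁ = O(1/Ω), K₂₂ = o(Ω)... in particular K₁₂(Ω) → 0 and K₂₂(Ω) → 0, so the vector (0,1)ᵀ is annihilated by K(Ω;n) in the limit Ω → 0. -/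

import Mathlib

/-- Bessel function of the first kind of nonnegative integer order, via its power series. -/
noncomputable def besselJnat (n : ℕ) (z : ℂ) : ℂ :=
  ∑' k : ℕ, ((-1 : ℂ) ^ k / ((Nat.factorial k : ℂ) * (Nat.factorial (k + n) : ℂ)))
    * (z / 2) ^ (2 * k + n)

/-- Bessel function of the first kind of integer order. -/
noncomputable def besselJ (n : ℤ) (z : ℂ) : ℂ :=
  if 0 ≤ n then besselJnat n.toNat z else (-1 : ℂ) ^ ((-n).toNat) * besselJnat (-n).toNat z

/-- Bessel function of the second kind of nonnegative integer order. -/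
noncomputable def besselYnat (n : ℕ) (z : ℂ) : ℂ :=
  (2 / (Real.pi : ℂ)) * (Complex.log (z / 2) + (Real.eulerMascheroniConstant : ℂ))
      * besselJnat n z
  - (1 / (Real.pi : ℂ)) * ∑ k ∈ Finset.range n,
      ((Nat.factorial (n - 1 - k) : ℂ) / (Nat.factorial k : ℂ)) * (z / 2) ^ (2 * (k : ℤ) - n)
  - (1 / (Real.pi : ℂ)) * ∑' k : ℕ,
      ((-1 : ℂ) ^ k * (((harmonic k : ℚ) + (harmonic (n + k) : ℚ) : ℚ) : ℂ)
        / ((Nat.factorial k : ℂ) * (Nat.factorial (n + k) : ℂ))) * (z / 2) ^ (2 * k + n)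

/-- Bessel function of the second kind of integer order. -/
noncomputable def besselY (n : ℤ) (z : ℂ) : ℂ :=
  if 0 ≤ n then besselYnat n.toNat z else (-1 : ℂ) ^ ((-n).toNat) * besselYnat (-n).toNat z

/-- Hankel function of the first kind of integer order. -/
noncomputable def hankelH1 (n : ℤ) (z : ℂ) : ℂ := besselJ n z + Complex.I * besselY n z


open Complex Filter Finset

namespace PMCHWTaux

/-- Sum of a power series with coefficients `a`. -/
noncomputable def Fa (a : ℕ → ℂ) (w : ℂ) : ℂ := ∑' k, a k * w ^ k

lemma summable_Fa {a : ℕ → ℂ} {A : ℝ} (ha : ∀ k, ‖a k‖ ≤ A / (Nat.factorial k))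
    (w : ℂ) : Summable fun k => a k * w ^ k := by
  refine Summable.of_norm (Summable.of_nonneg_of_le (fun k => norm_nonneg _)
    (fun k => ?_) (((Real.summable_pow_div_factorial ‖w‖).mul_left A)))
  rw [norm_mul, norm_pow]
  calc ‖a k‖ * ‖w‖ ^ k ≤ (A / (Nat.factorial k)) * ‖w‖ ^ k := by
        gcongr; exact ha k
    _ = A * (‖w‖ ^ k / (Nat.factorial k)) := by ring

lemma shift_bound {a : ℕ → ℂ} {A : ℝ} (ha : ∀ k, ‖a k‖ ≤ A / (Nat.factorial k)) :
    ∀ k : ℕ, ‖((k : ℂ) + 1) * a (k + 1)‖ ≤ A / (Nat.factorial k) := by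
  intro k
  rw [norm_mul]
  have h1 : ‖((k : ℂ) + 1)‖ = (k : ℝ) + 1 := by
    rw [show ((k : ℂ) + 1) = ((k + 1 : ℕ) : ℂ) by push_cast; ring]
    rw [Complex.norm_natCast]
    push_cast; ring
  rw [h1]
  have h2 := ha (k + 1)
  have h3 : (Nat.factorial (k + 1) : ℝ) = ((k : ℝ) + 1) * (Nat.factorial k) := by
    rw [Nat.factorial_succ]; push_cast; ring
  have hk : (0 : ℝ) < (k : ℝ) + 1 := by positivity
  have hfac : (0 : ℝ) < (Nat.factorial k : ℝ) := by positivity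
  calc ((k : ℝ) + 1) * ‖a (k + 1)‖ ≤ ((k : ℝ) + 1) * (A / (Nat.factorial (k + 1))) := by
        gcongr
    _ = A / (Nat.factorial k) := by rw [h3]; field_simp
end PMCHWTaux

namespace PMCHWTaux

lemma hasDerivAt_Fa {a : ℕ → ℂ} {A : ℝ} (ha : ∀ k, ‖a k‖ ≤ A / (Nat.factorial k))
    (y : ℂ) : HasDerivAt (Fa a) (Fa (fun k => ((k : ℂ) + 1) * a (k + 1)) y) y := by
  have hA : 0 ≤ A := le_trans (norm_nonneg (a 0)) (by simpa using ha 0)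
  set R : ℝ := ‖y‖ + 1 with hR
  have hR1 : (1:ℝ) ≤ R := le_add_of_nonneg_left (norm_nonneg y)
  have hRpos : (0:ℝ) < R := lt_of_lt_of_le one_pos hR1
  have hu : Summable (fun k : ℕ => A * ((2*R)^k / (Nat.factorial k))) :=
    (Real.summable_pow_div_factorial _).mul_left A
  have hbound : ∀ (k : ℕ), ∀ z : ℂ, z ∈ Metric.ball (0:ℂ) R →
      ‖a k * ((k:ℂ) * z ^ (k-1))‖ ≤ A * ((2*R)^k / (Nat.factorial k)) := by
    intro k z hz
    have hz' : ‖z‖ < R := by simpa using hz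
    have h1 : ‖a k * ((k:ℂ) * z ^ (k-1))‖ = ‖a k‖ * ((k:ℝ) * ‖z‖^(k-1)) := by
      rw [norm_mul, norm_mul, norm_pow, Complex.norm_natCast]
    rw [h1]
    have h2 : ‖z‖^(k-1) ≤ R^(k-1) := pow_le_pow_left₀ (norm_nonneg z) hz'.le _
    have h3 : (k:ℝ) ≤ 2^k := by exact_mod_cast k.lt_two_pow_self.le
    have h4 : R^(k-1) ≤ R^k := pow_le_pow_right₀ hR1 (Nat.sub_le k 1)
    have h5 : ‖a k‖ * ((k:ℝ) * ‖z‖^(k-1)) ≤ (A / (Nat.factorial k)) * ((2:ℝ)^k * R^k) := by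
      have hak := ha k
      have hknn : (0:ℝ) ≤ (k:ℝ) := Nat.cast_nonneg k
      have c1 : (k:ℝ) * ‖z‖^(k-1) ≤ (2:ℝ)^k * R^k := by
        calc (k:ℝ) * ‖z‖^(k-1) ≤ (2:ℝ)^k * R^(k-1) := by
              gcongr
          _ ≤ (2:ℝ)^k * R^k := by gcongr
      have hnn : (0:ℝ) ≤ (k:ℝ) * ‖z‖^(k-1) := by positivity
      exact mul_le_mul hak c1 hnn (by positivity)
    calc ‖a k‖ * ((k:ℝ) * ‖z‖^(k-1)) ≤ (A / (Nat.factorial k)) * ((2:ℝ)^k * R^k) := h5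
      _ = A * ((2*R)^k / (Nat.factorial k)) := by rw [mul_pow]; ring
  have hyball : y ∈ Metric.ball (0:ℂ) R := by
    simp only [Metric.mem_ball, dist_zero_right]; exact lt_of_lt_of_le (by linarith) le_rfl
  have key : HasDerivAt (fun z => ∑' k, a k * z ^ k)
      (∑' k, a k * ((k:ℂ) * y ^ (k-1))) y := by
    refine hasDerivAt_tsum_of_isPreconnected hu Metric.isOpen_ball
      ((convex_ball _ _).isPreconnected) (fun k z _ => ?_) hbound
      (Metric.mem_ball_self hRpos) (summable_Fa ha 0) hyball
    exact (hasDerivAt_pow k z).const_mul (a k)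
  have hsum : Summable fun k => a k * ((k:ℂ) * y ^ (k-1)) :=
    Summable.of_norm (Summable.of_nonneg_of_le (fun k => norm_nonneg _)
      (fun k => hbound k y hyball) hu)
  have heq : (∑' k, a k * ((k:ℂ) * y ^ (k-1)))
      = Fa (fun k => ((k : ℂ) + 1) * a (k + 1)) y := by
    rw [hsum.tsum_eq_zero_add]
    unfold Fa
    simp only [Nat.cast_zero, zero_mul, mul_zero, zero_add]
    refine tsum_congr fun k => ?_
    push_cast
    ring_nf
  exact heq ▸ key

lemma Fa_zero (a : ℕ → ℂ) : Fa a 0 = a 0 := by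
  unfold Fa
  rw [tsum_eq_single 0]
  · simp
  · intro k hk; simp [zero_pow hk]

lemma tendsto_Fa {a : ℕ → ℂ} {A : ℝ} (ha : ∀ k, ‖a k‖ ≤ A / (Nat.factorial k)) :
    Filter.Tendsto (Fa a) (nhds 0) (nhds (a 0)) := by
  have h := (hasDerivAt_Fa ha 0).continuousAt
  rw [ContinuousAt, Fa_zero] at h
  exact h

end PMCHWTaux

namespace PMCHWTaux

open scoped Nat

/-- coefficients of the Bessel J series in the variable (z/2)^2 -/
noncomputable def aJ (m : ℕ) (k : ℕ) : ℂ :=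
  (-1 : ℂ) ^ k / ((Nat.factorial k : ℂ) * (Nat.factorial (k + m) : ℂ))

/-- coefficients of the tail series of Bessel Y -/
noncomputable def aY (m : ℕ) (k : ℕ) : ℂ :=
  (-1 : ℂ) ^ k * (((harmonic k : ℚ) + (harmonic (m + k) : ℚ) : ℚ) : ℂ)
    / ((Nat.factorial k : ℂ) * (Nat.factorial (m + k) : ℂ))

lemma aJ_bound (m : ℕ) : ∀ k, ‖aJ m k‖ ≤ 1 / (Nat.factorial k) := by
  intro k
  unfold aJ
  rw [norm_div, norm_pow, norm_neg, norm_one, one_pow, norm_mul,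
    Complex.norm_natCast, Complex.norm_natCast]
  have h1 : (1:ℝ) ≤ (Nat.factorial (k + m) : ℝ) := by
    exact_mod_cast Nat.one_le_iff_ne_zero.mpr (Nat.factorial_ne_zero _)
  have h2 : (0:ℝ) < (Nat.factorial k : ℝ) := by positivity
  rw [one_div, one_div]
  gcongr
  calc (Nat.factorial k : ℝ) = (Nat.factorial k : ℝ) * 1 := by ring
    _ ≤ (Nat.factorial k : ℝ) * (Nat.factorial (k + m) : ℝ) := by gcongr

lemma harmonic_le (k : ℕ) : harmonic k ≤ (k : ℚ) := by
  induction k with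
  | zero => simp [harmonic_zero]
  | succ k ih =>
    rw [harmonic_succ]
    push_cast
    have : ((k:ℚ) + 1)⁻¹ ≤ 1 := by
      rw [inv_le_one_iff₀]; right; linarith [Nat.cast_nonneg (α := ℚ) k]
    linarith

lemma aY_bound (m : ℕ) (hm : 1 ≤ m) : ∀ k, ‖aY m k‖ ≤ 2 / (Nat.factorial k) := by
  intro k
  unfold aY
  have hh0 : ∀ j : ℕ, (0:ℚ) ≤ harmonic j := by
    intro j
    unfold harmonic
    apply Finset.sum_nonneg
    intro i _
    positivity
  have hh : (0:ℚ) ≤ harmonic k + harmonic (m + k) := by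
    have := hh0 k; have := hh0 (m + k); linarith
  have habs : ‖((((harmonic k : ℚ) + (harmonic (m + k) : ℚ)) : ℚ) : ℂ)‖
      = ((harmonic k + harmonic (m + k) : ℚ) : ℝ) := by
    rw [show ((((harmonic k : ℚ) + (harmonic (m + k) : ℚ)) : ℚ) : ℂ)
        = (((harmonic k + harmonic (m + k) : ℚ) : ℝ) : ℂ) by push_cast; ring]
    have hR : (0:ℝ) ≤ ((harmonic k + harmonic (m + k) : ℚ) : ℝ) := by exact_mod_cast hh
    rw [Complex.norm_real, Real.norm_eq_abs, _root_.abs_of_nonneg hR]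
  rw [norm_div, norm_mul, norm_pow, norm_neg, norm_one, one_pow, one_mul, norm_mul,
    Complex.norm_natCast, Complex.norm_natCast, habs]
  have hfk : (0:ℝ) < (Nat.factorial k : ℝ) := by positivity
  have hmk1 : 1 ≤ m + k := le_trans hm (Nat.le_add_right m k)
  have hfmk : ((m + k : ℕ) : ℝ) ≤ (Nat.factorial (m + k) : ℝ) := by
    exact_mod_cast Nat.self_le_factorial (m + k)
  have hmkpos : (0:ℝ) < ((m + k : ℕ) : ℝ) := by exact_mod_cast hmk1
  have hnum : ((harmonic k + harmonic (m + k) : ℚ) : ℝ) ≤ 2 * ((m + k : ℕ) : ℝ) := by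
    have h1 : harmonic k ≤ (k : ℚ) := harmonic_le k
    have h2 : harmonic (m + k) ≤ ((m + k : ℕ) : ℚ) := harmonic_le (m + k)
    have : (k : ℚ) ≤ ((m + k : ℕ) : ℚ) := by exact_mod_cast Nat.le_add_left k m
    have hq : harmonic k + harmonic (m + k) ≤ 2 * ((m + k : ℕ) : ℚ) := by linarith
    exact_mod_cast hq
  calc ((harmonic k + harmonic (m + k) : ℚ) : ℝ) / ((Nat.factorial k : ℝ) * (Nat.factorial (m + k) : ℝ))
      ≤ (2 * ((m + k : ℕ) : ℝ)) / ((Nat.factorial k : ℝ) * ((m + k : ℕ) : ℝ)) := by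
        gcongr
    _ = 2 / (Nat.factorial k : ℝ) := by field_simp

end PMCHWTaux

namespace PMCHWTaux

open Complex Filter Finset

noncomputable def FJ (m : ℕ) (z : ℂ) : ℂ := Fa (aJ m) ((z/2)^2)
noncomputable def FJ' (m : ℕ) (z : ℂ) : ℂ := Fa (fun k => ((k:ℂ)+1) * aJ m (k+1)) ((z/2)^2)
noncomputable def FY (m : ℕ) (z : ℂ) : ℂ := Fa (aY m) ((z/2)^2)
noncomputable def FY' (m : ℕ) (z : ℂ) : ℂ := Fa (fun k => ((k:ℂ)+1) * aY m (k+1)) ((z/2)^2)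

lemma besselJnat_eq (m : ℕ) (z : ℂ) : besselJnat m z = (z/2)^m * FJ m z := by
  unfold besselJnat FJ Fa aJ
  rw [← tsum_mul_left]
  refine tsum_congr fun k => ?_
  rw [← pow_mul, pow_add]
  ring

lemma ytail_eq (m : ℕ) (z : ℂ) :
    (∑' k : ℕ, ((-1 : ℂ) ^ k * (((harmonic k : ℚ) + (harmonic (m + k) : ℚ) : ℚ) : ℂ)
        / ((Nat.factorial k : ℂ) * (Nat.factorial (m + k) : ℂ))) * (z / 2) ^ (2 * k + m))
      = (z/2)^m * FY m z := by
  unfold FY Fa aY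
  rw [← tsum_mul_left]
  refine tsum_congr fun k => ?_
  rw [← pow_mul, pow_add]
  ring

noncomputable def SS (p : ℕ) (z : ℂ) : ℂ :=
  ∑ k ∈ Finset.range (p+1),
    ((Nat.factorial (p - k) : ℂ) / (Nat.factorial k : ℂ)) * (z/2) ^ (2*(k:ℤ) - ((p:ℤ)+1))

lemma besselYnat_eq (p : ℕ) (z : ℂ) : besselYnat (p+1) z =
    (2/(Real.pi:ℂ)) * (Complex.log (z/2) + (Real.eulerMascheroniConstant : ℂ))
      * ((z/2)^(p+1) * FJ (p+1) z)
    - (1/(Real.pi:ℂ)) * SS p z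
    - (1/(Real.pi:ℂ)) * ((z/2)^(p+1) * FY (p+1) z) := by
  unfold besselYnat SS
  rw [besselJnat_eq, ytail_eq]
  have hsum : ∀ z : ℂ, (∑ k ∈ Finset.range (p+1),
      ((Nat.factorial (p + 1 - 1 - k) : ℂ) / (Nat.factorial k : ℂ))
        * (z/2) ^ (2*(k:ℤ) - ((p+1:ℕ):ℤ)))
      = ∑ k ∈ Finset.range (p+1),
      ((Nat.factorial (p - k) : ℂ) / (Nat.factorial k : ℂ)) * (z/2) ^ (2*(k:ℤ) - ((p:ℤ)+1)) := by
    intro z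
    refine Finset.sum_congr rfl fun k _ => ?_
    have h1 : p + 1 - 1 - k = p - k := by omega
    have h2 : (2*(k:ℤ) - ((p+1:ℕ):ℤ)) = (2*(k:ℤ) - ((p:ℤ)+1)) := by push_cast; ring
    rw [h1, h2]
  rw [hsum]

noncomputable def GJ (p : ℕ) (z : ℂ) : ℂ := (((p:ℂ)+1)/2) * FJ (p+1) z + (z/2)^2 * FJ' (p+1) z
noncomputable def GY (p : ℕ) (z : ℂ) : ℂ := (((p:ℂ)+1)/2) * FY (p+1) z + (z/2)^2 * FY' (p+1) z

lemma hasDerivAt_half (z : ℂ) : HasDerivAt (fun z : ℂ => z/2) (1/2) z := by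
  simpa using (hasDerivAt_id z).div_const 2

lemma hasDerivAt_w (z : ℂ) : HasDerivAt (fun z : ℂ => (z/2)^2) (z/2) z := by
  have h := (hasDerivAt_half z).fun_pow 2
  refine h.congr_deriv ?_
  ring

lemma hasDerivAt_FJ (m : ℕ) (z : ℂ) :
    HasDerivAt (fun z => FJ m z) (FJ' m z * (z/2)) z := by
  have h := (hasDerivAt_Fa (aJ_bound m) ((z/2)^2)).comp z (hasDerivAt_w z)
  simpa [FJ, FJ', Function.comp, Function.comp_def] using h

lemma hasDerivAt_FY (m : ℕ) (hm : 1 ≤ m) (z : ℂ) :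
    HasDerivAt (fun z => FY m z) (FY' m z * (z/2)) z := by
  have h := (hasDerivAt_Fa (aY_bound m hm) ((z/2)^2)).comp z (hasDerivAt_w z)
  simpa [FY, FY', Function.comp, Function.comp_def] using h

lemma hasDerivAt_besselJnat (p : ℕ) (z : ℂ) :
    HasDerivAt (besselJnat (p+1)) ((z/2)^p * GJ p z) z := by
  rw [show besselJnat (p+1) = fun z => (z/2)^(p+1) * FJ (p+1) z from
    funext (besselJnat_eq (p+1))]
  have hpow : HasDerivAt (fun z : ℂ => (z/2)^(p+1))
      ((((p:ℂ))+1) * (z/2)^p * (1/2)) z := by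
    have h := (hasDerivAt_half z).fun_pow (p+1)
    simpa using h
  have h := hpow.mul (hasDerivAt_FJ (p+1) z)
  refine h.congr_deriv ?_
  unfold GJ
  ring

lemma besselJ_eq (p : ℕ) : besselJ ((p:ℤ)+1) = besselJnat (p+1) := by
  funext z
  unfold besselJ
  rw [if_pos (by positivity)]
  norm_num

lemma deriv_besselJ (p : ℕ) (z : ℂ) :
    deriv (besselJ ((p:ℤ)+1)) z = (z/2)^p * GJ p z := by
  rw [besselJ_eq]
  exact (hasDerivAt_besselJnat p z).deriv

end PMCHWTaux

namespace PMCHWTaux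

open Complex Filter Finset

noncomputable def SSd (p : ℕ) (z : ℂ) : ℂ :=
  ∑ k ∈ Finset.range (p+1),
    ((Nat.factorial (p - k) : ℂ) / (Nat.factorial k : ℂ)) *
      (((2*(k:ℤ) - ((p:ℤ)+1) : ℤ) : ℂ) * (z/2) ^ (2*(k:ℤ) - ((p:ℤ)+1) - 1) * (1/2))

noncomputable def Yd (p : ℕ) (z : ℂ) : ℂ :=
  (2/(Real.pi:ℂ)) * ((1/z) * ((z/2)^(p+1) * FJ (p+1) z)
      + (Complex.log (z/2) + (Real.eulerMascheroniConstant : ℂ)) * ((z/2)^p * GJ p z))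
  - (1/(Real.pi:ℂ)) * SSd p z
  - (1/(Real.pi:ℂ)) * ((z/2)^p * GY p z)

lemma hasDerivAt_JJ (p : ℕ) (z : ℂ) :
    HasDerivAt (fun z : ℂ => (z/2)^(p+1) * FJ (p+1) z) ((z/2)^p * GJ p z) z := by
  have h := hasDerivAt_besselJnat p z
  rwa [show besselJnat (p+1) = fun z => (z/2)^(p+1) * FJ (p+1) z from
    funext (besselJnat_eq (p+1))] at h

lemma hasDerivAt_YY (p : ℕ) (z : ℂ) :
    HasDerivAt (fun z : ℂ => (z/2)^(p+1) * FY (p+1) z) ((z/2)^p * GY p z) z := by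
  have hpow : HasDerivAt (fun z : ℂ => (z/2)^(p+1))
      ((((p:ℂ))+1) * (z/2)^p * (1/2)) z := by
    have h := (hasDerivAt_half z).fun_pow (p+1)
    simpa using h
  have h := hpow.mul (hasDerivAt_FY (p+1) (by omega) z)
  refine h.congr_deriv ?_
  unfold GY
  ring

lemma hasDerivAt_besselYnat (p : ℕ) (z : ℂ) (hz : z ≠ 0) (hs : z/2 ∈ Complex.slitPlane) :
    HasDerivAt (besselYnat (p+1)) (Yd p z) z := by
  have h2 : z/2 ≠ 0 := div_ne_zero hz two_ne_zero
  rw [show besselYnat (p+1) = fun z =>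
      (2/(Real.pi:ℂ)) * ((Complex.log (z/2) + (Real.eulerMascheroniConstant : ℂ))
        * ((z/2)^(p+1) * FJ (p+1) z))
      - (1/(Real.pi:ℂ)) * SS p z
      - (1/(Real.pi:ℂ)) * ((z/2)^(p+1) * FY (p+1) z) from
    funext (fun z => by rw [besselYnat_eq p z]; ring)]
  have hlog : HasDerivAt (fun z : ℂ =>
      Complex.log (z/2) + (Real.eulerMascheroniConstant : ℂ)) (1/z) z := by
    have h := ((Complex.hasDerivAt_log hs).comp z (hasDerivAt_half z)).add_const
      ((Real.eulerMascheroniConstant : ℂ))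
    have h' : (1:ℂ)/z = (z/2)⁻¹ * (1/2) := by
      field_simp
    rw [h']
    exact h
  have h1 : HasDerivAt (fun z : ℂ =>
      (2/(Real.pi:ℂ)) * ((Complex.log (z/2) + (Real.eulerMascheroniConstant : ℂ))
        * ((z/2)^(p+1) * FJ (p+1) z)))
      ((2/(Real.pi:ℂ)) * ((1/z) * ((z/2)^(p+1) * FJ (p+1) z)
        + (Complex.log (z/2) + (Real.eulerMascheroniConstant : ℂ)) * ((z/2)^p * GJ p z))) z :=
    (hlog.mul (hasDerivAt_JJ p z)).const_mul _
  have hSS : HasDerivAt (fun z => SS p z) (SSd p z) z := by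
    unfold SS SSd
    refine HasDerivAt.fun_sum fun k _ => ?_
    have h := ((hasDerivAt_zpow (2*(k:ℤ) - ((p:ℤ)+1)) (z/2) (Or.inl h2)).comp z
      (hasDerivAt_half z)).const_mul
      ((Nat.factorial (p - k) : ℂ) / (Nat.factorial k : ℂ))
    exact h
  have hYt := hasDerivAt_YY p z
  have := (h1.sub (hSS.const_mul (1/(Real.pi:ℂ)))).sub (hYt.const_mul (1/(Real.pi:ℂ)))
  exact this

lemma besselY_eq (p : ℕ) : besselY ((p:ℤ)+1) = besselYnat (p+1) := by
  funext z
  unfold besselY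
  rw [if_pos (by positivity)]
  norm_num

lemma hankel_eq (p : ℕ) : hankelH1 ((p:ℤ)+1)
    = fun z => besselJnat (p+1) z + Complex.I * besselYnat (p+1) z := by
  funext z
  unfold hankelH1
  rw [besselJ_eq, besselY_eq]

noncomputable def Hd (p : ℕ) (z : ℂ) : ℂ := (z/2)^p * GJ p z + Complex.I * Yd p z

lemma deriv_hankel (p : ℕ) (z : ℂ) (hz : z ≠ 0) (hs : z/2 ∈ Complex.slitPlane) :
    deriv (hankelH1 ((p:ℤ)+1)) z = Hd p z := by
  rw [hankel_eq]
  exact ((hasDerivAt_besselJnat p z).add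
    ((hasDerivAt_besselYnat p z hz hs).const_mul Complex.I)).deriv

end PMCHWTaux

namespace PMCHWTaux

open Complex Filter Finset

/-- upper half plane -/
def U : Set ℂ := {z : ℂ | 0 < z.im}

lemma U_ne {z : ℂ} (hz : z ∈ U) : z ≠ 0 := by
  intro h
  rw [h] at hz
  simp [U] at hz

lemma U_slit {z : ℂ} (hz : z ∈ U) : z/2 ∈ Complex.slitPlane := by
  have : (z/2).im = z.im / 2 := by
    simp [Complex.div_im, Complex.normSq]
  rw [Complex.mem_slitPlane_iff]
  right
  rw [this]
  have := hz
  simp only [U, Set.mem_setOf_eq] at this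
  positivity

lemma tendsto_half : Tendsto (fun z : ℂ => z/2) (nhdsWithin 0 U) (nhds 0) := by
  have h := ((continuous_id.div_const (2:ℂ)).tendsto 0).mono_left
    (nhdsWithin_le_nhds (s := U))
  simpa using h

lemma tendsto_upow (j : ℕ) (hj : j ≠ 0) :
    Tendsto (fun z : ℂ => (z/2)^j) (nhdsWithin 0 U) (nhds 0) := by
  have h := tendsto_half.pow j
  rwa [zero_pow hj] at h

lemma tendsto_w : Tendsto (fun z : ℂ => (z/2)^2) (nhdsWithin 0 U) (nhds 0) :=
  tendsto_upow 2 (by norm_num)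

lemma tendsto_FJ (m : ℕ) : Tendsto (FJ m) (nhdsWithin 0 U) (nhds (aJ m 0)) := by
  have h := (tendsto_Fa (aJ_bound m)).comp tendsto_w
  exact h

lemma tendsto_FJ' (m : ℕ) :
    Tendsto (FJ' m) (nhdsWithin 0 U) (nhds (aJ m 1)) := by
  have h := (tendsto_Fa (shift_bound (aJ_bound m))).comp tendsto_w
  simp only [Nat.cast_zero, zero_add, one_mul] at h
  exact h

lemma tendsto_FY (m : ℕ) (hm : 1 ≤ m) :
    Tendsto (FY m) (nhdsWithin 0 U) (nhds (aY m 0)) := by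
  have h := (tendsto_Fa (aY_bound m hm)).comp tendsto_w
  exact h

lemma tendsto_FY' (m : ℕ) (hm : 1 ≤ m) :
    Tendsto (FY' m) (nhdsWithin 0 U) (nhds (aY m 1)) := by
  have h := (tendsto_Fa (shift_bound (aY_bound m hm))).comp tendsto_w
  simp only [Nat.cast_zero, zero_add, one_mul] at h
  exact h

lemma tendsto_GJ (p : ℕ) :
    Tendsto (GJ p) (nhdsWithin 0 U) (nhds ((((p:ℂ)+1)/2) * aJ (p+1) 0)) := by
  have h := (((tendsto_FJ (p+1)).const_mul ((((p:ℂ)+1)/2))).add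
    (tendsto_w.mul (tendsto_FJ' (p+1))))
  show Tendsto (fun z => GJ p z) _ _
  simpa [GJ] using h

lemma tendsto_GY (p : ℕ) :
    Tendsto (GY p) (nhdsWithin 0 U) (nhds ((((p:ℂ)+1)/2) * aY (p+1) 0)) := by
  have h := (((tendsto_FY (p+1) (by omega)).const_mul ((((p:ℂ)+1)/2))).add
    (tendsto_w.mul (tendsto_FY' (p+1) (by omega))))
  show Tendsto (fun z => GY p z) _ _
  simpa [GY] using h

lemma tendsto_z_mul_log :
    Tendsto (fun z : ℂ => z * Complex.log (z/2)) (nhdsWithin 0 U) (nhds 0) := by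
  have h1 : Tendsto (fun z : ℂ => ‖z‖) (nhdsWithin 0 U) (nhds 0) := by
    have := (continuous_norm.tendsto (0:ℂ)).mono_left (nhdsWithin_le_nhds (s := U))
    simpa using this
  have hb : Tendsto (fun z : ℂ => ‖z‖ * (Real.log 2 + Real.pi) - ‖z‖ * Real.log ‖z‖)
      (nhdsWithin 0 U) (nhds 0) := by
    have h2 : Tendsto (fun x : ℝ => x * Real.log x) (nhds 0) (nhds 0) := by
      have := Real.continuous_mul_log.tendsto 0
      simpa using this
    have h3 := (h1.mul_const (Real.log 2 + Real.pi)).sub (h2.comp h1)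
    simpa [Function.comp] using h3
  refine squeeze_zero_norm' ?_ hb
  have h4 : ∀ᶠ z : ℂ in nhdsWithin 0 U, ‖z‖ < 1 := by
    apply Filter.Eventually.filter_mono (nhdsWithin_le_nhds (s := U))
    have : Metric.ball (0:ℂ) 1 ∈ nhds (0:ℂ) := Metric.ball_mem_nhds _ one_pos
    filter_upwards [this] with z hz
    simpa using hz
  filter_upwards [h4, self_mem_nhdsWithin] with z hz1 hzU
  have hz0 : z ≠ 0 := U_ne hzU
  have hn0 : (0:ℝ) < ‖z‖ := norm_pos_iff.mpr hz0
  have hlog : ‖Complex.log (z/2)‖ ≤ |Real.log (‖z/2‖)| + Real.pi := by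
    calc ‖Complex.log (z/2)‖ ≤ |(Complex.log (z/2)).re| + |(Complex.log (z/2)).im| :=
          Complex.norm_le_abs_re_add_abs_im _
      _ ≤ |Real.log (‖z/2‖)| + Real.pi := by
          rw [Complex.log_re, Complex.log_im]
          gcongr
          exact Complex.abs_arg_le_pi _
  have habs : ‖z/2‖ = ‖z‖/2 := by
    rw [norm_div]
    norm_num
  have hld : Real.log (‖z‖/2) = Real.log ‖z‖ - Real.log 2 :=
    Real.log_div (ne_of_gt hn0) two_ne_zero
  have hlz : Real.log ‖z‖ < 0 := Real.log_neg hn0 hz1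
  have hl2 : (0:ℝ) < Real.log 2 := Real.log_pos one_lt_two
  have habs2 : |Real.log (‖z/2‖)| = Real.log 2 - Real.log ‖z‖ := by
    rw [habs, hld, abs_of_neg (by linarith)]
    ring
  calc ‖z * Complex.log (z/2)‖ = ‖z‖ * ‖Complex.log (z/2)‖ := norm_mul _ _
    _ ≤ ‖z‖ * (|Real.log (‖z/2‖)| + Real.pi) := by
        gcongr
    _ = ‖z‖ * (Real.log 2 + Real.pi) - ‖z‖ * Real.log ‖z‖ := by
        rw [habs2]; ring

lemma tendsto_uL :
    Tendsto (fun z : ℂ => (z/2) * (Complex.log (z/2) + (Real.eulerMascheroniConstant : ℂ)))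
      (nhdsWithin 0 U) (nhds 0) := by
  have h1 := tendsto_z_mul_log.const_mul ((2:ℂ)⁻¹)
  have h2 := tendsto_half.mul_const ((Real.eulerMascheroniConstant : ℂ))
  have h := h1.add h2
  simp only [mul_zero, zero_mul, add_zero, zero_add] at h
  refine h.congr fun z => ?_
  ring

lemma tendsto_Qsum (p : ℕ) (d : ℕ → ℂ) :
    Tendsto (fun z : ℂ => ∑ k ∈ Finset.range (p+1), d k * (z/2)^(2*k))
      (nhdsWithin 0 U) (nhds (d 0)) := by
  have h : Tendsto (fun z : ℂ => ∑ k ∈ Finset.range (p+1), d k * (z/2)^(2*k))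
      (nhdsWithin 0 U) (nhds (∑ k ∈ Finset.range (p+1), if k = 0 then d 0 else 0)) := by
    refine tendsto_finset_sum _ fun k _ => ?_
    by_cases hk : k = 0
    · subst hk
      simpa using tendsto_const_nhds (x := d 0) (f := nhdsWithin (0:ℂ) U)
    · simp only [if_neg hk]
      have := (tendsto_upow (2*k) (by omega)).const_mul (d k)
      simpa using this
  simpa using h

end PMCHWTaux

namespace PMCHWTaux

open Complex Filter Finset

lemma SS_mul (p : ℕ) (z : ℂ) (hz : z ≠ 0) (W : ℂ) :
    SS p z * ((z/2)^(p+1) * W)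
      = (∑ k ∈ Finset.range (p+1),
          ((Nat.factorial (p - k) : ℂ) / (Nat.factorial k : ℂ)) * (z/2)^(2*k)) * W := by
  have h2 : (z/2 : ℂ) ≠ 0 := div_ne_zero hz two_ne_zero
  unfold SS
  rw [Finset.sum_mul, Finset.sum_mul]
  refine Finset.sum_congr rfl fun k _ => ?_
  have key : (z/2) ^ (2*(k:ℤ) - ((p:ℤ)+1)) * (z/2)^(p+1) = (z/2)^(2*k) := by
    rw [← zpow_natCast (z/2) (p+1), ← zpow_add₀ h2, ← zpow_natCast (z/2) (2*k)]
    congr 1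
    push_cast
    ring
  linear_combination (((Nat.factorial (p - k) : ℂ) / (Nat.factorial k : ℂ)) * W) * key

lemma SSd_mul (p : ℕ) (z : ℂ) (hz : z ≠ 0) (W : ℂ) :
    SSd p z * (z * ((z/2)^(p+1) * W))
      = (∑ k ∈ Finset.range (p+1),
          ((Nat.factorial (p - k) : ℂ) / (Nat.factorial k : ℂ))
            * (((2*(k:ℤ) - ((p:ℤ)+1) : ℤ)) : ℂ) * (z/2)^(2*k)) * W := by
  have h2 : (z/2 : ℂ) ≠ 0 := div_ne_zero hz two_ne_zero
  unfold SSd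
  rw [Finset.sum_mul, Finset.sum_mul]
  refine Finset.sum_congr rfl fun k _ => ?_
  have key : (z/2) ^ (2*(k:ℤ) - ((p:ℤ)+1) - 1) * ((z/2) * (z/2)^(p+1)) = (z/2)^(2*k) := by
    have h3 : (z/2) * (z/2)^(p+1) = (z/2)^(p+2) := by ring
    rw [h3, ← zpow_natCast (z/2) (p+2), ← zpow_add₀ h2, ← zpow_natCast (z/2) (2*k)]
    congr 1
    push_cast
    ring
  linear_combination (((Nat.factorial (p - k) : ℂ) / (Nat.factorial k : ℂ))
    * (((2*(k:ℤ) - ((p:ℤ)+1) : ℤ)) : ℂ) * W) * key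

lemma pi_ne : ((Real.pi : ℂ)) ≠ 0 := by
  exact_mod_cast Complex.ofReal_ne_zero.mpr Real.pi_ne_zero

lemma aJ0 (m : ℕ) : aJ m 0 = 1 / (Nat.factorial m : ℂ) := by
  unfold aJ
  simp

lemma limHJ (p : ℕ) :
    Tendsto (fun z => hankelH1 ((p:ℤ)+1) z * besselJ ((p:ℤ)+1) z) (nhdsWithin 0 U)
      (nhds (-Complex.I/((Real.pi:ℂ)*((p:ℂ)+1)))) := by
  have hQ0 : Tendsto (fun z : ℂ => ∑ k ∈ Finset.range (p+1),
      ((Nat.factorial (p - k) : ℂ) / (Nat.factorial k : ℂ)) * (z/2)^(2*k))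
      (nhdsWithin 0 U) (nhds ((Nat.factorial p : ℂ))) := by
    have h := tendsto_Qsum p (fun k => ((Nat.factorial (p - k) : ℂ) / (Nat.factorial k : ℂ)))
    simpa using h
  have main : Tendsto (fun z : ℂ =>
      (z/2)^(2*p+2) * (FJ (p+1) z)^2
      + Complex.I * ( (2/(Real.pi:ℂ)) * ((z/2) * (Complex.log (z/2)
            + (Real.eulerMascheroniConstant : ℂ))) * ((z/2)^(2*p+1) * (FJ (p+1) z)^2)
        - (1/(Real.pi:ℂ)) * ((∑ k ∈ Finset.range (p+1),
            ((Nat.factorial (p - k) : ℂ) / (Nat.factorial k : ℂ)) * (z/2)^(2*k)) * FJ (p+1) z)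
        - (1/(Real.pi:ℂ)) * ((z/2)^(2*p+2) * (FY (p+1) z * FJ (p+1) z))))
      (nhdsWithin 0 U)
      (nhds ((0:ℂ) * (aJ (p+1) 0)^2
        + Complex.I * ( (2/(Real.pi:ℂ)) * 0 * ((0:ℂ) * (aJ (p+1) 0)^2)
        - (1/(Real.pi:ℂ)) * ((Nat.factorial p : ℂ) * aJ (p+1) 0)
        - (1/(Real.pi:ℂ)) * ((0:ℂ) * (aY (p+1) 0 * aJ (p+1) 0))))) := by
    refine Tendsto.add ?_ (Tendsto.const_mul _ (Tendsto.sub (Tendsto.sub ?_ ?_) ?_))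
    · exact (tendsto_upow (2*p+2) (by omega)).mul ((tendsto_FJ (p+1)).pow 2)
    · exact (Tendsto.const_mul _ tendsto_uL).mul
        ((tendsto_upow (2*p+1) (by omega)).mul ((tendsto_FJ (p+1)).pow 2))
    · exact Tendsto.const_mul _ (hQ0.mul (tendsto_FJ (p+1)))
    · exact Tendsto.const_mul _ ((tendsto_upow (2*p+2) (by omega)).mul
        ((tendsto_FY (p+1) (by omega)).mul (tendsto_FJ (p+1))))
  have hval : ((0:ℂ) * (aJ (p+1) 0)^2
        + Complex.I * ( (2/(Real.pi:ℂ)) * 0 * ((0:ℂ) * (aJ (p+1) 0)^2)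
        - (1/(Real.pi:ℂ)) * ((Nat.factorial p : ℂ) * aJ (p+1) 0)
        - (1/(Real.pi:ℂ)) * ((0:ℂ) * (aY (p+1) 0 * aJ (p+1) 0))))
      = -Complex.I/((Real.pi:ℂ)*((p:ℂ)+1)) := by
    rw [aJ0]
    have hfac : ((Nat.factorial (p+1) : ℂ)) = ((p:ℂ)+1) * (Nat.factorial p : ℂ) := by
      rw [Nat.factorial_succ]
      push_cast
      ring
    have hfp : (Nat.factorial p : ℂ) ≠ 0 := by
      exact_mod_cast Nat.cast_ne_zero.mpr (Nat.factorial_ne_zero p)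
    have hp1 : ((p:ℂ)+1) ≠ 0 := by
      have : (0:ℝ) < (p:ℝ) + 1 := by positivity
      intro h
      have := congrArg Complex.re h
      simp at this
      linarith
    have key : ((Nat.factorial p : ℂ)) * (1/((Nat.factorial (p+1) : ℂ))) = 1/((p:ℂ)+1) := by
      rw [hfac]
      field_simp
    simp only [zero_mul, mul_zero, sub_zero, zero_add, zero_sub]
    rw [key]
    field_simp
  rw [hval] at main
  refine main.congr' ?_
  filter_upwards [self_mem_nhdsWithin] with z hzU
  have hz : z ≠ 0 := U_ne hzU
  have hS := SS_mul p z hz (FJ (p+1) z)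
  rw [besselJ_eq,
    show hankelH1 ((p:ℤ)+1) z = besselJnat (p+1) z + Complex.I * besselYnat (p+1) z from
      by rw [hankel_eq], besselJnat_eq, besselYnat_eq]
  linear_combination (Complex.I/(Real.pi:ℂ)) * hS

end PMCHWTaux

namespace PMCHWTaux

open Complex Filter Finset

lemma limzHJd (p : ℕ) :
    Tendsto (fun z => z * hankelH1 ((p:ℤ)+1) z * deriv (besselJ ((p:ℤ)+1)) z)
      (nhdsWithin 0 U) (nhds (-Complex.I/(Real.pi:ℂ))) := by
  have hQ0 : Tendsto (fun z : ℂ => ∑ k ∈ Finset.range (p+1),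
      ((Nat.factorial (p - k) : ℂ) / (Nat.factorial k : ℂ)) * (z/2)^(2*k))
      (nhdsWithin 0 U) (nhds ((Nat.factorial p : ℂ))) := by
    simpa using tendsto_Qsum p (fun k => ((Nat.factorial (p - k) : ℂ) / (Nat.factorial k : ℂ)))
  have t1 : Tendsto (fun z : ℂ => 2*((z/2)^(2*p+2) * (FJ (p+1) z * GJ p z)))
      (nhdsWithin 0 U) (nhds 0) := by
    have := ((tendsto_upow (2*p+2) (by omega)).mul
      ((tendsto_FJ (p+1)).mul (tendsto_GJ p))).const_mul (2:ℂ)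
    simpa using this
  have t2 : Tendsto (fun z : ℂ => (2/(Real.pi:ℂ)) * ((z/2) * (Complex.log (z/2)
        + (Real.eulerMascheroniConstant : ℂ))) * (2*((z/2)^(2*p+1) * (FJ (p+1) z * GJ p z))))
      (nhdsWithin 0 U) (nhds 0) := by
    have := (tendsto_uL.const_mul ((2:ℂ)/(Real.pi:ℂ))).mul
      (((tendsto_upow (2*p+1) (by omega)).mul
        ((tendsto_FJ (p+1)).mul (tendsto_GJ p))).const_mul (2:ℂ))
    simpa using this
  have t3 : Tendsto (fun z : ℂ => (1/(Real.pi:ℂ)) * (2*((∑ k ∈ Finset.range (p+1),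
        ((Nat.factorial (p - k) : ℂ) / (Nat.factorial k : ℂ)) * (z/2)^(2*k)) * GJ p z)))
      (nhdsWithin 0 U)
      (nhds ((1/(Real.pi:ℂ)) * (2*((Nat.factorial p : ℂ) * (((p:ℂ)+1)/2 * aJ (p+1) 0))))) :=
    ((hQ0.mul (tendsto_GJ p)).const_mul (2:ℂ)).const_mul _
  have t4 : Tendsto (fun z : ℂ => (1/(Real.pi:ℂ))
      * (2*((z/2)^(2*p+2) * (FY (p+1) z * GJ p z)))) (nhdsWithin 0 U) (nhds 0) := by
    have := (((tendsto_upow (2*p+2) (by omega)).mul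
      ((tendsto_FY (p+1) (by omega)).mul (tendsto_GJ p))).const_mul (2:ℂ)).const_mul
      ((1:ℂ)/(Real.pi:ℂ))
    simpa using this
  have main := t1.add (((t2.sub t3).sub t4).const_mul Complex.I)
  rw [show (0:ℂ) + Complex.I * ((0 - (1/(Real.pi:ℂ))
      * (2*((Nat.factorial p : ℂ) * (((p:ℂ)+1)/2 * aJ (p+1) 0)))) - 0)
      = -Complex.I/(Real.pi:ℂ) from ?_] at main
  · refine main.congr' ?_
    filter_upwards [self_mem_nhdsWithin] with z hzU
    have hz : z ≠ 0 := U_ne hzU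
    have hS := SS_mul p z hz (GJ p z)
    rw [deriv_besselJ,
      show hankelH1 ((p:ℤ)+1) z = besselJnat (p+1) z + Complex.I * besselYnat (p+1) z from
        by rw [hankel_eq], besselJnat_eq, besselYnat_eq]
    linear_combination (2*Complex.I/(Real.pi:ℂ)) * hS
  · rw [aJ0]
    have hfac : ((Nat.factorial (p+1) : ℂ)) = ((p:ℂ)+1) * (Nat.factorial p : ℂ) := by
      rw [Nat.factorial_succ]; push_cast; ring
    have hfp : (Nat.factorial p : ℂ) ≠ 0 := by
      exact_mod_cast Nat.cast_ne_zero.mpr (Nat.factorial_ne_zero p)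
    have hp1 : ((p:ℂ)+1) ≠ 0 := by
      intro h
      have := congrArg Complex.re h
      simp at this
      have : (0:ℝ) ≤ (p:ℝ) := Nat.cast_nonneg p
      linarith
    have key : (Nat.factorial p : ℂ) * (((p:ℂ)+1)/2 * (1/(Nat.factorial (p+1) : ℂ)))
        = 1/2 := by
      rw [hfac]
      field_simp
    rw [key]
    field_simp
    ring

lemma limzHdJ (p : ℕ) :
    Tendsto (fun z => z * deriv (hankelH1 ((p:ℤ)+1)) z * besselJ ((p:ℤ)+1) z)
      (nhdsWithin 0 U) (nhds (Complex.I/(Real.pi:ℂ))) := by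
  have hQd : Tendsto (fun z : ℂ => ∑ k ∈ Finset.range (p+1),
      ((Nat.factorial (p - k) : ℂ) / (Nat.factorial k : ℂ))
        * (((2*(k:ℤ) - ((p:ℤ)+1) : ℤ)) : ℂ) * (z/2)^(2*k))
      (nhdsWithin 0 U) (nhds (-((Nat.factorial p : ℂ) * ((p:ℂ)+1)))) := by
    have := tendsto_Qsum p (fun k => ((Nat.factorial (p - k) : ℂ) / (Nat.factorial k : ℂ))
      * (((2*(k:ℤ) - ((p:ℤ)+1) : ℤ)) : ℂ))
    have hv : ((Nat.factorial (p - 0) : ℂ) / (Nat.factorial 0 : ℂ))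
        * (((2*((0:ℕ):ℤ) - ((p:ℤ)+1) : ℤ)) : ℂ) = -((Nat.factorial p : ℂ) * ((p:ℂ)+1)) := by
      push_cast
      simp
      ring
    rw [hv] at this
    exact this
  have t1 : Tendsto (fun z : ℂ => 2*((z/2)^(2*p+2) * (GJ p z * FJ (p+1) z)))
      (nhdsWithin 0 U) (nhds 0) := by
    have := ((tendsto_upow (2*p+2) (by omega)).mul
      ((tendsto_GJ p).mul (tendsto_FJ (p+1)))).const_mul (2:ℂ)
    simpa using this
  have t2 : Tendsto (fun z : ℂ => (2/(Real.pi:ℂ)) * ((z/2)^(2*p+2) * (FJ (p+1) z)^2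
        + ((z/2) * (Complex.log (z/2) + (Real.eulerMascheroniConstant : ℂ)))
          * (2*((z/2)^(2*p+1) * (GJ p z * FJ (p+1) z)))))
      (nhdsWithin 0 U) (nhds 0) := by
    have ha := (tendsto_upow (2*p+2) (by omega)).mul ((tendsto_FJ (p+1)).pow 2)
    have hb := tendsto_uL.mul (((tendsto_upow (2*p+1) (by omega)).mul
      ((tendsto_GJ p).mul (tendsto_FJ (p+1)))).const_mul (2:ℂ))
    have := (ha.add hb).const_mul ((2:ℂ)/(Real.pi:ℂ))
    simpa using this
  have t3 : Tendsto (fun z : ℂ => (1/(Real.pi:ℂ)) * ((∑ k ∈ Finset.range (p+1),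
        ((Nat.factorial (p - k) : ℂ) / (Nat.factorial k : ℂ))
          * (((2*(k:ℤ) - ((p:ℤ)+1) : ℤ)) : ℂ) * (z/2)^(2*k)) * FJ (p+1) z))
      (nhdsWithin 0 U)
      (nhds ((1/(Real.pi:ℂ)) * (-((Nat.factorial p : ℂ) * ((p:ℂ)+1)) * aJ (p+1) 0))) :=
    (hQd.mul (tendsto_FJ (p+1))).const_mul _
  have t4 : Tendsto (fun z : ℂ => (1/(Real.pi:ℂ))
      * (2*((z/2)^(2*p+2) * (GY p z * FJ (p+1) z)))) (nhdsWithin 0 U) (nhds 0) := by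
    have := (((tendsto_upow (2*p+2) (by omega)).mul
      ((tendsto_GY p).mul (tendsto_FJ (p+1)))).const_mul (2:ℂ)).const_mul
      ((1:ℂ)/(Real.pi:ℂ))
    simpa using this
  have main := t1.add (((t2.sub t3).sub t4).const_mul Complex.I)
  rw [show (0:ℂ) + Complex.I * ((0 - (1/(Real.pi:ℂ))
      * (-((Nat.factorial p : ℂ) * ((p:ℂ)+1)) * aJ (p+1) 0)) - 0)
      = Complex.I/(Real.pi:ℂ) from ?_] at main
  · refine main.congr' ?_
    filter_upwards [self_mem_nhdsWithin] with z hzU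
    have hz : z ≠ 0 := U_ne hzU
    have hSd := SSd_mul p z hz (FJ (p+1) z)
    have hinv : z * (1/z) = 1 := by field_simp
    rw [deriv_hankel p z hz (U_slit hzU), besselJ_eq, besselJnat_eq]
    unfold Hd Yd
    linear_combination (Complex.I/(Real.pi:ℂ)) * hSd
      - (Complex.I * (2/(Real.pi:ℂ)) * (z/2)^(2*p+2) * (FJ (p+1) z)^2) * hinv
  · rw [aJ0]
    have hfac : ((Nat.factorial (p+1) : ℂ)) = ((p:ℂ)+1) * (Nat.factorial p : ℂ) := by
      rw [Nat.factorial_succ]; push_cast; ring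
    have hfp : (Nat.factorial p : ℂ) ≠ 0 := by
      exact_mod_cast Nat.cast_ne_zero.mpr (Nat.factorial_ne_zero p)
    have hp1 : ((p:ℂ)+1) ≠ 0 := by
      intro h
      have := congrArg Complex.re h
      simp at this
      have : (0:ℝ) ≤ (p:ℝ) := Nat.cast_nonneg p
      linarith
    have key : -((Nat.factorial p : ℂ) * ((p:ℂ)+1)) * (1/(Nat.factorial (p+1) : ℂ))
        = -1 := by
      rw [hfac]
      field_simp
    rw [key]
    field_simp
    ring

end PMCHWTaux

namespace PMCHWTaux

open Complex Filter Finset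

lemma tendsto_div (c : ℝ) (hc : 0 < c) :
    Tendsto (fun Ω : ℂ => Ω / (c:ℂ)) (nhdsWithin 0 U) (nhdsWithin 0 U) := by
  rw [tendsto_nhdsWithin_iff]
  constructor
  · have := ((continuous_id.div_const ((c:ℂ))).tendsto 0).mono_left
      (nhdsWithin_le_nhds (s := U))
    simpa using this
  · filter_upwards [self_mem_nhdsWithin] with Ω hΩ
    have him : (Ω / (c:ℂ)).im = Ω.im * c⁻¹ := by
      rw [div_eq_mul_inv, ← Complex.ofReal_inv, Complex.mul_im]
      simp
    show 0 < (Ω / (c:ℂ)).im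
    rw [him]
    have h1 : 0 < Ω.im := hΩ
    positivity

end PMCHWTaux

open PMCHWTaux in
theorem pmchwt_degeneracy_at_zero' (n : ℤ) (hn : 1 ≤ n) (c₁ c₂ s₁ s₂ : ℝ)
    (hc₁ : 0 < c₁) (hc₂ : 0 < c₂) (hs₁ : 0 < s₁) (hs₂ : 0 < s₂) :
    Tendsto (fun Ω : ℂ => -(I * Ω) * (hankelH1 n (Ω / c₁) * besselJ n (Ω / c₁) / s₁
        + hankelH1 n (Ω / c₂) * besselJ n (Ω / c₂) / s₂))
      (nhdsWithin 0 {z : ℂ | 0 < z.im}) (nhds 0) ∧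
    Tendsto (fun Ω : ℂ => (Ω / c₁) * hankelH1 n (Ω / c₁) * deriv (besselJ n) (Ω / c₁)
        + (Ω / c₂) * deriv (hankelH1 n) (Ω / c₂) * besselJ n (Ω / c₂))
      (nhdsWithin 0 {z : ℂ | 0 < z.im}) (nhds 0) := by
  have hU : ({z : ℂ | 0 < z.im}) = U := rfl
  set p := (n-1).toNat with hpdef
  have hp : n = ((p:ℤ)) + 1 := by omega
  rw [hU, hp]
  constructor
  · have hHJ1 := (limHJ p).comp (tendsto_div c₁ hc₁)
    have hHJ2 := (limHJ p).comp (tendsto_div c₂ hc₂)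
    have hzero : Tendsto (fun Ω : ℂ => -(I * Ω)) (nhdsWithin 0 U) (nhds 0) := by
      have hc : Continuous (fun Ω : ℂ => -(I * Ω)) :=
        (continuous_const.mul continuous_id).neg
      have := (hc.tendsto (0:ℂ)).mono_left (nhdsWithin_le_nhds (s := U))
      simpa using this
    have hsum := (hHJ1.div_const ((s₁:ℂ))).add (hHJ2.div_const ((s₂:ℂ)))
    have hmul := hzero.mul hsum
    rw [zero_mul] at hmul
    simpa [Function.comp] using hmul
  · have hA := (limzHJd p).comp (tendsto_div c₁ hc₁)
    have hB := (limzHdJ p).comp (tendsto_div c₂ hc₂)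
    have hsum := hA.add hB
    rw [show -Complex.I/(Real.pi:ℂ) + Complex.I/(Real.pi:ℂ) = 0 by ring] at hsum
    simpa [Function.comp] using hsum

open Complex Filter

/-- Asymptotic degeneracy of the modified PMCHWT symbol at zero frequency: for `n ≥ 1` and
material constants `c₁, c₂, s₁, s₂ > 0`, the second-column entries
`K₁₂(Ω) = -iΩ(H_n⁽¹⁾(Ω/c₁)J_n(Ω/c₁)/s₁ + H_n⁽¹⁾(Ω/c₂)J_n(Ω/c₂)/s₂)` and
`K₂₂(Ω) = (Ω/c₁)H_n⁽¹⁾(Ω/c₁)J_n'(Ω/c₁) + (Ω/c₂)H_n⁽¹⁾'(Ω/c₂)J_n(Ω/c₂)` of the mode-`n`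
PMCHWT matrix both tend to `0` as `Ω → 0` in the upper half-plane; hence the vector
`(0,1)ᵀ` is annihilated by `K(Ω;n)` in the limit `Ω → 0`. -/
theorem pmchwt_degeneracy_at_zero (n : ℤ) (hn : 1 ≤ n) (c₁ c₂ s₁ s₂ : ℝ)
    (hc₁ : 0 < c₁) (hc₂ : 0 < c₂) (hs₁ : 0 < s₁) (hs₂ : 0 < s₂) :
    Tendsto (fun Ω : ℂ => -(I * Ω) * (hankelH1 n (Ω / c₁) * besselJ n (Ω / c₁) / s₁
        + hankelH1 n (Ω / c₂) * besselJ n (Ω / c₂) / s₂))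
      (nhdsWithin 0 {z : ℂ | 0 < z.im}) (nhds 0) ∧
    Tendsto (fun Ω : ℂ => (Ω / c₁) * hankelH1 n (Ω / c₁) * deriv (besselJ n) (Ω / c₁)
        + (Ω / c₂) * deriv (hankelH1 n) (Ω / c₂) * besselJ n (Ω / c₂))
      (nhdsWithin 0 {z : ℂ | 0 < z.im}) (nhds 0) := by
  exact pmchwt_degeneracy_at_zero' n hn c₁ c₂ s₁ s₂ hc₁ hc₂ hs₁ hs₂
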